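/- Let m be a positive integer, R' ≥ 2 an integer, D_1 a probability distribution on Fin m with full support, c, h_1, …, h_{R'−1} : Fin m → {−1,1}, and α_1, …, α_{R'−1} ∈ ℝ. Define D_2, …, D_{R'} and Z_1, …, Z_{R'−1} by the boosting update. Then KL(D_{R'}‖D_1) = −ln(∏_{r=1}^{R'−1} Z_r) − ∑_{r=1}^{R'−1} α_r · ∑ i, D_{R'} i · c i · h_r i. -/

import Mathlib

open Finset

/-- telescoping formula for the KL divergence between the distribution
`D_{R'}` produced by `R'-1` boosting updates and the initial distribution `D_1`.
Here `D k` denotes `D_{k+1}`, i.e. `D 0` is the initial distribution. -/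
theorem stmt_8 (m R' : ℕ) (hm : 0 < m) (hR' : 2 ≤ R')
    (D : ℕ → Fin m → ℝ)
    (hD0pos : ∀ i, 0 < D 0 i) (hD0sum : ∑ i, D 0 i = 1)
    (c : Fin m → ℝ) (hc : ∀ i, c i = 1 ∨ c i = -1)
    (h : Fin (R' - 1) → Fin m → ℝ) (hh : ∀ r i, h r i = 1 ∨ h r i = -1)
    (α : Fin (R' - 1) → ℝ) (Z : Fin (R' - 1) → ℝ)
    (hZ : ∀ r : Fin (R' - 1), Z r = ∑ i, D r i * Real.exp (-(α r) * c i * h r i))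
    (hDs : ∀ r : Fin (R' - 1), ∀ i,
      D (r + 1) i = D r i * Real.exp (-(α r) * c i * h r i) / Z r) :
    ∑ i, D (R' - 1) i * Real.log (D (R' - 1) i / D 0 i)
      = -Real.log (∏ r, Z r) - ∑ r, α r * ∑ i, D (R' - 1) i * c i * h r i := by
  have hN : 0 < R' - 1 := by omega
  haveI : Nonempty (Fin m) := ⟨⟨0, hm⟩⟩
  set α' : ℕ → ℝ := fun n => if hn : n < (R' - 1) then α ⟨n, hn⟩ else 0 with hα'
  set h'' : ℕ → Fin m → ℝ := fun n => if hn : n < (R' - 1) then h ⟨n, hn⟩ else fun _ => 1 with hh''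
  set Z' : ℕ → ℝ := fun n => if hn : n < (R' - 1) then Z ⟨n, hn⟩ else 1 with hZ'
  have key : ∀ k, k ≤ (R' - 1) → (∀ i, 0 < D k i) ∧ (∑ i, D k i = 1) ∧
      (0 < ∏ r ∈ Finset.range k, Z' r) ∧
      (∀ i, D k i = D 0 i * Real.exp (∑ r ∈ Finset.range k, (-(α' r) * c i * h'' r i)) /
        ∏ r ∈ Finset.range k, Z' r) := by
    intro k
    induction k with
    | zero => intro _; exact ⟨hD0pos, hD0sum, by simp, fun i => by simp⟩
    | succ k ih =>
      intro hk
      have hkN : k < (R' - 1) := by omega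
      obtain ⟨hA, hB, hPpos, hC⟩ := ih (le_of_lt hkN)
      have hZpos : 0 < Z ⟨k, hkN⟩ := by
        rw [hZ ⟨k, hkN⟩]
        apply Finset.sum_pos
        · intro i _; exact mul_pos (hA i) (Real.exp_pos _)
        · exact univ_nonempty
      have hZ'k : Z' k = Z ⟨k, hkN⟩ := by simp [hZ', hkN]
      have hα'k : α' k = α ⟨k, hkN⟩ := by simp [hα', hkN]
      have hh''k : h'' k = h ⟨k, hkN⟩ := by simp [hh'', hkN]
      have hDs' : ∀ i, D (k + 1) i
          = D k i * Real.exp (-(α ⟨k, hkN⟩) * c i * h ⟨k, hkN⟩ i) / Z ⟨k, hkN⟩ :=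
        fun i => hDs ⟨k, hkN⟩ i
      have hApos : ∀ i, 0 < D (k + 1) i := by
        intro i
        rw [hDs' i]
        exact div_pos (mul_pos (hA i) (Real.exp_pos _)) hZpos
      refine ⟨hApos, ?_, ?_, ?_⟩
      · have : ∑ i, D (k + 1) i
            = (∑ i, D k i * Real.exp (-(α ⟨k, hkN⟩) * c i * h ⟨k, hkN⟩ i)) / Z ⟨k, hkN⟩ := by
          rw [Finset.sum_div]
          exact Finset.sum_congr rfl fun i _ => hDs' i
        rw [this, ← hZ ⟨k, hkN⟩, div_self (ne_of_gt hZpos)]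
      · rw [Finset.prod_range_succ, hZ'k]
        exact mul_pos hPpos hZpos
      · intro i
        rw [hDs' i, hC i, Finset.prod_range_succ, Finset.sum_range_succ, Real.exp_add,
          hZ'k, hα'k, hh''k]
        field_simp
        congr 2
        exact Finset.sum_congr rfl fun x _ => by ring
  obtain ⟨hA, hB, hPpos, hC⟩ := key (R' - 1) le_rfl
  have hlog : ∀ i, Real.log (D (R' - 1) i / D 0 i)
      = (∑ r ∈ Finset.range (R' - 1), (-(α' r) * c i * h'' r i))
        - Real.log (∏ r ∈ Finset.range (R' - 1), Z' r) := by
    intro i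
    have : D (R' - 1) i / D 0 i
        = Real.exp (∑ r ∈ Finset.range (R' - 1), (-(α' r) * c i * h'' r i)) /
          ∏ r ∈ Finset.range (R' - 1), Z' r := by
      rw [hC i]
      field_simp [ne_of_gt (hD0pos i), ne_of_gt hPpos]
      congr 1
      exact Finset.sum_congr rfl fun x _ => by ring
    rw [this, Real.log_div (Real.exp_ne_zero _) (ne_of_gt hPpos), Real.log_exp]
  have hZconv : ∏ r, Z r = ∏ r ∈ Finset.range (R' - 1), Z' r := by
    rw [← Fin.prod_univ_eq_prod_range (fun n => Z' n) (R' - 1)]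
    exact Finset.prod_congr rfl fun r _ => by simp [hZ', r.isLt]
  have hsum2 : ∑ r, α r * ∑ i, D (R' - 1) i * c i * h r i
      = ∑ r ∈ Finset.range (R' - 1), α' r * ∑ i, D (R' - 1) i * c i * h'' r i := by
    rw [← Fin.sum_univ_eq_sum_range (fun n => α' n * ∑ i, D (R' - 1) i * c i * h'' n i) (R' - 1)]
    exact Finset.sum_congr rfl fun r _ => by simp [hα', hh'', r.isLt]
  calc ∑ i, D (R' - 1) i * Real.log (D (R' - 1) i / D 0 i)
      = ∑ i, (D (R' - 1) i * (∑ r ∈ Finset.range (R' - 1), (-(α' r) * c i * h'' r i))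
          - D (R' - 1) i * Real.log (∏ r ∈ Finset.range (R' - 1), Z' r)) := by
        refine Finset.sum_congr rfl fun i _ => ?_
        rw [hlog i]; ring
    _ = (∑ i, D (R' - 1) i * (∑ r ∈ Finset.range (R' - 1), (-(α' r) * c i * h'' r i)))
          - (∑ i, D (R' - 1) i) * Real.log (∏ r ∈ Finset.range (R' - 1), Z' r) := by
        rw [Finset.sum_sub_distrib, Finset.sum_mul]
    _ = -Real.log (∏ r, Z r) - ∑ r, α r * ∑ i, D (R' - 1) i * c i * h r i := by
        rw [hB, one_mul, hZconv, hsum2]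
        have : ∑ i, D (R' - 1) i * (∑ r ∈ Finset.range (R' - 1), (-(α' r) * c i * h'' r i))
            = -(∑ r ∈ Finset.range (R' - 1), α' r * ∑ i, D (R' - 1) i * c i * h'' r i) := by
          calc ∑ i, D (R' - 1) i * (∑ r ∈ Finset.range (R' - 1), (-(α' r) * c i * h'' r i))
              = ∑ i, ∑ r ∈ Finset.range (R' - 1), D (R' - 1) i * (-(α' r) * c i * h'' r i) := by
                simp [Finset.mul_sum]
            _ = ∑ r ∈ Finset.range (R' - 1), ∑ i, D (R' - 1) i * (-(α' r) * c i * h'' r i) :=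
                Finset.sum_comm
            _ = -(∑ r ∈ Finset.range (R' - 1), α' r * ∑ i, D (R' - 1) i * c i * h'' r i) := by
                rw [← Finset.sum_neg_distrib]
                refine Finset.sum_congr rfl fun r _ => ?_
                rw [Finset.mul_sum, ← Finset.sum_neg_distrib]
                refine Finset.sum_congr rfl fun i _ => ?_
                ring
        rw [this]; ring
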